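/- Fix an odd number k of voters and a pair of alternatives. If each of k independent voters prefers alternative a to alternative b with probability at least q (and q ≤ 1/2), then the probability that a strict majority of the voters prefer a to b is at least C(k, (k+1)/2) · q^{(k+1)/2} · (1 − q)^{(k−1)/2}. In particular, if q ≥ c·(log n / n)^{1/(k+1)} with c > √2 and n ≥ (2c)^{2k+2}, this majority probability is at least c·√(log n / n). -/

import Mathlib

open Finset


private def majF (k : ℕ) : Finset (Fin k → Bool) :=
  univ.filter (fun ω : Fin k → Bool => k < 2 * (univ.filter fun v => ω v = true).card)

private def FF (k : ℕ) (p : Fin k → ℝ) : ℝ :=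
  ∑ ω ∈ majF k, ∏ v : Fin k, (if ω v = true then p v else 1 - p v)

private lemma FF_split (k : ℕ) (p : Fin k → ℝ) (v : Fin k) (z : ℝ) :
    FF k (Function.update p v z)
      = z * ∑ ω ∈ (majF k).filter (fun ω => ω v = true),
              ∏ w ∈ univ.erase v, (if ω w = true then p w else 1 - p w)
        + (1 - z) * ∑ ω ∈ (majF k).filter (fun ω => ¬ ω v = true),
              ∏ w ∈ univ.erase v, (if ω w = true then p w else 1 - p w) := by
  rw [FF, ← Finset.sum_filter_add_sum_filter_not (majF k) (fun ω => ω v = true),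
    Finset.mul_sum, Finset.mul_sum]
  congr 1
  · apply Finset.sum_congr rfl
    intro ω hω
    rw [Finset.mem_filter] at hω
    rw [← Finset.mul_prod_erase univ _ (Finset.mem_univ v), hω.2, if_pos rfl,
      Function.update_self]
    congr 1
    apply Finset.prod_congr rfl
    intro w hw
    rw [Function.update_of_ne (Finset.ne_of_mem_erase hw)]
  · apply Finset.sum_congr rfl
    intro ω hω
    rw [Finset.mem_filter] at hω
    rw [← Finset.mul_prod_erase univ _ (Finset.mem_univ v), if_neg hω.2,
      Function.update_self]
    congr 1
    apply Finset.prod_congr rfl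
    intro w hw
    rw [Function.update_of_ne (Finset.ne_of_mem_erase hw)]

private lemma trues_update_true (k : ℕ) (ω : Fin k → Bool) (v : Fin k) :
    (univ.filter fun w => Function.update ω v true w = true)
      = insert v (univ.filter fun w => ω w = true) := by
  ext w
  simp only [Finset.mem_filter, Finset.mem_univ, true_and, Finset.mem_insert]
  rcases eq_or_ne w v with rfl | h
  · simp
  · simp [Function.update_of_ne h, h]

private lemma B_le_A (k : ℕ) (p : Fin k → ℝ) (hp0 : ∀ w, 0 ≤ p w) (hp1 : ∀ w, p w ≤ 1)
    (v : Fin k) :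
    ∑ ω ∈ (majF k).filter (fun ω => ¬ ω v = true),
        ∏ w ∈ univ.erase v, (if ω w = true then p w else 1 - p w)
    ≤ ∑ ω ∈ (majF k).filter (fun ω => ω v = true),
        ∏ w ∈ univ.erase v, (if ω w = true then p w else 1 - p w) := by
  set r : (Fin k → Bool) → ℝ := fun ω => ∏ w ∈ univ.erase v, (if ω w = true then p w else 1 - p w)
  have hr0 : ∀ ω, 0 ≤ r ω := by
    intro ω
    apply Finset.prod_nonneg
    intro w _
    split
    · exact hp0 w
    · linarith [hp1 w]
  have key : ∑ ω ∈ (majF k).filter (fun ω => ¬ ω v = true), r ω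
      = ∑ ω ∈ ((majF k).filter (fun ω => ¬ ω v = true)).image
            (fun ω => Function.update ω v true), r ω := by
    rw [Finset.sum_image]
    · apply Finset.sum_congr rfl
      intro ω hω
      apply Finset.prod_congr rfl
      intro w hw
      rw [Function.update_of_ne (Finset.ne_of_mem_erase hw)]
    · intro ω hω ω' hω' h
      rw [Finset.mem_coe, Finset.mem_filter] at hω hω'
      funext w
      rcases eq_or_ne w v with rfl | hne
      · simp [Bool.not_eq_true] at hω hω'
        rw [hω.2, hω'.2]
      · have : Function.update ω v true w = Function.update ω' v true w := congrFun h w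
        rwa [Function.update_of_ne hne, Function.update_of_ne hne] at this
  rw [key]
  apply Finset.sum_le_sum_of_subset_of_nonneg
  · intro ω hω
    rw [Finset.mem_image] at hω
    obtain ⟨σ, hσ, rfl⟩ := hω
    rw [Finset.mem_filter, majF, Finset.mem_filter] at hσ
    obtain ⟨⟨-, hmaj⟩, hv⟩ := hσ
    have hv' : σ v = false := by simpa using hv
    rw [Finset.mem_filter, majF, Finset.mem_filter]
    refine ⟨⟨Finset.mem_univ _, ?_⟩, Function.update_self v true σ⟩
    rw [trues_update_true]
    have hσv : v ∉ univ.filter fun w => σ w = true := by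
      simp [hv']
    rw [Finset.card_insert_of_notMem hσv]
    omega
  · intro ω _ _
    exact hr0 ω

private lemma FF_update_mono (k : ℕ) (p : Fin k → ℝ) (hp0 : ∀ w, 0 ≤ p w) (hp1 : ∀ w, p w ≤ 1)
    (v : Fin k) (x y : ℝ) (hxy : x ≤ y) :
    FF k (Function.update p v x) ≤ FF k (Function.update p v y) := by
  rw [FF_split, FF_split]
  have := B_le_A k p hp0 hp1 v
  nlinarith [this, hxy]

private lemma FF_const_le (k : ℕ) (q : ℝ) (hq0 : 0 ≤ q) (hq1 : q ≤ 1)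
    (qv : Fin k → ℝ) (hqv : ∀ v, q ≤ qv v) (hqv1 : ∀ v, qv v ≤ 1) :
    FF k (fun _ => q) ≤ FF k qv := by
  have main : ∀ s : Finset (Fin k),
      FF k (fun _ => q) ≤ FF k (fun v => if v ∈ s then qv v else q) := by
    intro s
    induction s using Finset.induction with
    | empty => simp
    | @insert a s ha ih =>
      refine le_trans ih ?_
      have h1 : (fun v => if v ∈ insert a s then qv v else q)
          = Function.update (fun v => if v ∈ s then qv v else q) a (qv a) := by
        funext w
        rcases eq_or_ne w a with rfl | hne
        · simp
        · simp [Function.update_of_ne hne, hne, Finset.mem_insert]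
      have h2 : (fun v => if v ∈ s then qv v else q)
          = Function.update (fun v => if v ∈ s then qv v else q) a q := by
        funext w
        rcases eq_or_ne w a with rfl | hne
        · simp [ha]
        · simp [Function.update_of_ne hne]
      rw [h1]
      nth_rewrite 1 [h2]
      apply FF_update_mono
      · intro w; split
        · linarith [hqv w]
        · exact hq0
      · intro w; split
        · exact hqv1 w
        · exact hq1
      · exact hqv a
  have := main Finset.univ
  simpa using this

private lemma count_exact (k m : ℕ) :
    (univ.filter (fun ω : Fin k → Bool => (univ.filter fun v => ω v = true).card = m)).card
      = k.choose m := by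
  have : (univ.filter (fun ω : Fin k → Bool => (univ.filter fun v => ω v = true).card = m)).card
      = (Finset.powersetCard m (univ : Finset (Fin k))).card := by
    apply Finset.card_bij (fun ω _ => univ.filter fun v => ω v = true)
    · intro ω hω
      rw [Finset.mem_filter] at hω
      rw [Finset.mem_powersetCard]
      exact ⟨Finset.subset_univ _, hω.2⟩
    · intro ω hω ω' hω' h
      funext v
      have := Finset.ext_iff.mp h v
      simp only [Finset.mem_filter, Finset.mem_univ, true_and] at this
      cases hv : ω v
      · cases hv' : ω' v
        · rfl
        · exact absurd (this.mpr hv') (by simp [hv])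
      · exact (this.mp hv).symm
    · intro s hs
      rw [Finset.mem_powersetCard] at hs
      refine ⟨fun v => decide (v ∈ s), ?_, ?_⟩
      · rw [Finset.mem_filter]
        refine ⟨Finset.mem_univ _, ?_⟩
        convert hs.2 using 2
        ext v
        simp
      · ext v
        simp
  rw [this, Finset.card_powersetCard, Finset.card_univ, Fintype.card_fin]

private lemma FF_const_ge (k : ℕ) (hk : Odd k) (q : ℝ) (hq0 : 0 ≤ q) (hq1 : q ≤ 1) :
    (k.choose ((k + 1) / 2) : ℝ) * q ^ ((k + 1) / 2) * (1 - q) ^ ((k - 1) / 2)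
      ≤ FF k (fun _ => q) := by
  set m := (k + 1) / 2 with hm
  obtain ⟨j, hj⟩ := hk
  have hkm : 2 * m = k + 1 := by omega
  set T := univ.filter (fun ω : Fin k → Bool => (univ.filter fun v => ω v = true).card = m)
  have hTsub : T ⊆ majF k := by
    intro ω hω
    rw [Finset.mem_filter] at hω
    rw [majF, Finset.mem_filter]
    exact ⟨Finset.mem_univ _, by omega⟩
  have hterm : ∀ ω ∈ T, ∏ v : Fin k, (if ω v = true then q else 1 - q)
      = q ^ m * (1 - q) ^ ((k - 1) / 2) := by
    intro ω hω
    rw [Finset.mem_filter] at hω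
    rw [Finset.prod_ite, Finset.prod_const, Finset.prod_const, hω.2]
    congr 1
    have := Finset.card_filter_add_card_filter_not
      (s := (univ : Finset (Fin k))) (p := fun v => ω v = true)
    rw [Finset.card_univ, Fintype.card_fin] at this
    have : (univ.filter fun v => ¬ ω v = true).card = (k - 1) / 2 := by omega
    rw [this]
  have h1 : ∑ ω ∈ T, ∏ v : Fin k, (if ω v = true then q else 1 - q)
      = (k.choose m : ℝ) * (q ^ m * (1 - q) ^ ((k - 1) / 2)) := by
    rw [Finset.sum_congr rfl hterm, Finset.sum_const, ← count_exact k m, nsmul_eq_mul]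
  have h2 : ∑ ω ∈ T, ∏ v : Fin k, (if ω v = true then q else 1 - q)
      ≤ FF k (fun _ => q) := by
    apply Finset.sum_le_sum_of_subset_of_nonneg hTsub
    intro ω _ _
    apply Finset.prod_nonneg
    intro v _
    split <;> linarith
  rw [FF]  -- just to normalize? maybe unneeded
  calc (k.choose m : ℝ) * q ^ m * (1 - q) ^ ((k - 1) / 2)
      = ∑ ω ∈ T, ∏ v : Fin k, (if ω v = true then q else 1 - q) := by rw [h1]; ring
    _ ≤ _ := h2

private lemma two_pow_le_cb (n : ℕ) : 2^n ≤ Nat.centralBinom n := by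
  induction n with
  | zero => simp [Nat.centralBinom]
  | succ n ih =>
    have h := Nat.succ_mul_centralBinom_succ n
    have h2 : (n+1) * (2 * Nat.centralBinom n) ≤ (n+1) * Nat.centralBinom (n+1) := by
      rw [h]; ring_nf; nlinarith [Nat.centralBinom_pos n]
    have := Nat.le_of_mul_le_mul_left h2 (Nat.succ_pos n)
    calc 2^(n+1) = 2 * 2^n := by ring
    _ ≤ 2 * Nat.centralBinom n := by omega
    _ ≤ Nat.centralBinom (n+1) := this


/-- with `k` independent voters (`k` odd), each preferring `a` to `b` with
probability `qv v ≥ q` (and `q ≤ 1/2`), the probability that a strict majority prefers `a`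
to `b` is at least `C(k, (k+1)/2) · q^((k+1)/2) · (1-q)^((k-1)/2)`; moreover if
`q ≥ c·(log n / n)^(1/(k+1))` with `c > √2` and `n ≥ (2c)^(2k+2)`, then this majority
probability is at least `c·√(log n / n)`.  An outcome is `ω : Fin k → Bool`, where `ω v`
records whether voter `v` prefers `a` to `b`; its probability is
`∏ v, (if ω v then qv v else 1 - qv v)`. -/
theorem stmt14 (k : ℕ) (hk : Odd k) (q : ℝ) (hq0 : 0 ≤ q) (hq2 : q ≤ 1 / 2)
    (qv : Fin k → ℝ) (hqv : ∀ v, q ≤ qv v) (hqv1 : ∀ v, qv v ≤ 1) :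
    ((k.choose ((k + 1) / 2) : ℝ) * q ^ ((k + 1) / 2) * (1 - q) ^ ((k - 1) / 2)
      ≤ ∑ ω ∈ univ.filter (fun ω : Fin k → Bool => k < 2 * (univ.filter fun v => ω v = true).card),
          ∏ v : Fin k, (if ω v = true then qv v else 1 - qv v)) ∧
    ∀ (n : ℕ) (c : ℝ), Real.sqrt 2 < c → ((2 * c) ^ (2 * k + 2) ≤ (n : ℝ)) →
      c * (Real.log n / n) ^ ((1 : ℝ) / (k + 1)) ≤ q →
      c * Real.sqrt (Real.log n / n) ≤
        ∑ ω ∈ univ.filter (fun ω : Fin k → Bool => k < 2 * (univ.filter fun v => ω v = true).card),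
          ∏ v : Fin k, (if ω v = true then qv v else 1 - qv v) := by
  have hq1 : q ≤ 1 := by linarith
  have part1 : (k.choose ((k + 1) / 2) : ℝ) * q ^ ((k + 1) / 2) * (1 - q) ^ ((k - 1) / 2)
      ≤ FF k qv :=
    le_trans (FF_const_ge k hk q hq0 hq1) (FF_const_le k q hq0 hq1 qv hqv hqv1)
  refine ⟨part1, ?_⟩
  intro n c hc hn hq
  obtain ⟨j, hj⟩ := hk
  set m := (k + 1) / 2 with hm
  have hmj : m = j + 1 := by omega
  have hkj : (k - 1) / 2 = j := by omega
  -- 1 < c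
  have hs2 : (1:ℝ) < Real.sqrt 2 := by
    nlinarith [Real.sq_sqrt (by norm_num : (0:ℝ) ≤ 2), Real.sqrt_nonneg 2]
  have hc1 : (1:ℝ) ≤ c := by linarith
  -- n is large
  have hn4 : (4:ℝ) ≤ (n:ℝ) := by
    have h1 : (2:ℝ)^(2*k+2) ≤ (2*c)^(2*k+2) :=
      pow_le_pow_left₀ (by norm_num) (by linarith) _
    have h2 : (2:ℝ)^2 ≤ (2:ℝ)^(2*k+2) :=
      pow_le_pow_right₀ (by norm_num) (by omega)
    nlinarith
  set t := Real.log n / n with htdef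
  have ht : 0 ≤ t := by
    apply div_nonneg
    · exact Real.log_nonneg (by linarith)
    · linarith
  -- q^m ≥ c^m * √t
  have hbase : 0 ≤ c * t ^ ((1:ℝ)/(k+1)) :=
    mul_nonneg (by linarith) (Real.rpow_nonneg ht _)
  have hqm : c ^ m * Real.sqrt t ≤ q ^ m := by
    have h1 : (c * t ^ ((1:ℝ)/(k+1))) ^ m ≤ q ^ m := pow_le_pow_left₀ hbase hq m
    have h2 : (t ^ ((1:ℝ)/(k+1))) ^ m = Real.sqrt t := by
      rw [← Real.rpow_natCast (t ^ ((1:ℝ)/(k+1))) m, ← Real.rpow_mul ht]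
      have : (1:ℝ)/(k+1) * (m:ℝ) = 1/2 := by
        have h2m : (2:ℝ) * (m:ℝ) = (k:ℝ) + 1 := by
          have : (2 * m : ℕ) = k + 1 := by omega
          exact_mod_cast congrArg (Nat.cast : ℕ → ℝ) this
        have hk1 : (k:ℝ) + 1 > 0 := by positivity
        field_simp
        linarith
      rw [this, ← Real.sqrt_eq_rpow]
    rw [mul_pow, h2] at h1
    exact h1
  -- choose bound
  have hC : (2:ℝ)^j ≤ (k.choose m : ℝ) := by
    have h1 : 2^j ≤ k.choose m := by
      have h2 := two_pow_le_cb j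
      rw [Nat.centralBinom] at h2
      have h3 : k.choose m = (2*j).choose j + (2*j).choose (j+1) := by
        rw [hj, hmj]
        exact Nat.choose_succ_succ (2*j) j
      omega
    exact_mod_cast h1
  have hcj : (1:ℝ) ≤ c^j := one_le_pow₀ hc1
  have hhalfpos : (0:ℝ) < (1/2)^j := by positivity
  have h1 : (1:ℝ) ≤ (k.choose m : ℝ) * c^j * (1/2)^j := by
    have := mul_le_mul (mul_le_mul hC hcj (by norm_num) (by positivity))
      (le_refl ((1/2:ℝ)^j)) (le_of_lt hhalfpos)
      (by positivity)
    calc (1:ℝ) = 2^j * 1 * (1/2)^j := by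
          rw [mul_one, ← mul_pow]; norm_num
      _ ≤ _ := this
  have hcle : c ≤ (k.choose m : ℝ) * c^m * (1/2)^j := by
    have := mul_le_mul_of_nonneg_right h1 (by linarith : (0:ℝ) ≤ c)
    calc c = 1 * c := (one_mul c).symm
      _ ≤ (k.choose m : ℝ) * c^j * (1/2)^j * c := this
      _ = (k.choose m : ℝ) * c^m * (1/2)^j := by rw [hmj]; ring
  have hstep : c * Real.sqrt t ≤ (k.choose m : ℝ) * q ^ m * (1 - q) ^ ((k-1)/2) := by
    calc c * Real.sqrt t ≤ ((k.choose m : ℝ) * c^m * (1/2)^j) * Real.sqrt t :=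
          mul_le_mul_of_nonneg_right hcle (Real.sqrt_nonneg t)
      _ = (k.choose m : ℝ) * (c^m * Real.sqrt t) * (1/2)^j := by ring
      _ ≤ (k.choose m : ℝ) * q^m * (1-q)^((k-1)/2) := by
          rw [hkj]
          apply mul_le_mul
          · exact mul_le_mul_of_nonneg_left hqm (by positivity)
          · exact pow_le_pow_left₀ (by norm_num) (by linarith) j
          · positivity
          · positivity
  exact le_trans hstep part1
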